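/- Let n and k be relatively prime integers with 1 ≤ k ≤ n−k. Then the translation action of ℤ_n on the Johnson graph J(n,k) — where g ∈ ℤ_n sends a k-subset A of ℤ_n to A + g = {a + g : a ∈ A} — is an action by graph automorphisms of J(n,k), it is free on the vertex set, and it has exactly C(n,k)/n orbits on the vertex set (so J(n,k) is a lift by the group ℤ_n of a base graph with C(n,k)/n vertices). -/

import Mathlib

/-- The Johnson graph `J(n,k)`: vertices are the `k`-element subsets of `ZMod n`,
two subsets being adjacent iff their intersection has exactly `k-1` elements. -/
def johnsonGraph (n k : ℕ) : SimpleGraph {A : Finset (ZMod n) // A.card = k} where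
  Adj A B := ((A : Finset (ZMod n)) ∩ (B : Finset (ZMod n))).card + 1 = k
  symm := ⟨fun A B h => by
    change ((A : Finset (ZMod n)) ∩ (B : Finset (ZMod n))).card + 1 = k at h
    show ((B : Finset (ZMod n)) ∩ (A : Finset (ZMod n))).card + 1 = k
    rwa [Finset.inter_comm]⟩
  loopless := ⟨fun A h => by
    change ((A : Finset (ZMod n)) ∩ (A : Finset (ZMod n))).card + 1 = k at h
    rw [Finset.inter_self, A.2] at h
    omega⟩

/-- Translation of a `k`-subset of `ZMod n` by `g`. -/
def johnsonTranslate {n k : ℕ} (A : {A : Finset (ZMod n) // A.card = k}) (g : ZMod n) :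
    {A : Finset (ZMod n) // A.card = k} :=
  ⟨(A : Finset (ZMod n)).image (· + g), by
    rw [Finset.card_image_of_injective _ (add_left_injective g)]; exact A.2⟩

instance johnsonAddAction (n k : ℕ) : AddAction (ZMod n) {A : Finset (ZMod n) // A.card = k} where
  vadd g A := johnsonTranslate A g
  zero_vadd A := by
    show johnsonTranslate A 0 = A
    apply Subtype.ext
    simp [johnsonTranslate]
  add_vadd g h A := by
    show johnsonTranslate A (g + h) = johnsonTranslate (johnsonTranslate A h) g
    apply Subtype.ext
    simp only [johnsonTranslate, Finset.image_image]
    congr 1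
    ext x
    simp [Function.comp, add_assoc, add_comm h g]

lemma johnson_free (n k : ℕ) (hk1 : 1 ≤ k) (hk2 : k ≤ n - k) (hgcd : Nat.gcd n k = 1)
    (g : ZMod n) (A : {A : Finset (ZMod n) // A.card = k}) (h : johnsonTranslate A g = A) :
    g = 0 := by
  have hs : (A : Finset (ZMod n)).image (· + g) = (A : Finset (ZMod n)) :=
    congrArg Subtype.val h
  have hsum : ∑ x ∈ (A : Finset (ZMod n)).image (· + g), x = ∑ x ∈ (A : Finset (ZMod n)), (x + g) :=
    Finset.sum_image (fun x _ y _ hxy => by exact add_right_cancel hxy)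
  rw [hs, Finset.sum_add_distrib, Finset.sum_const, A.2] at hsum
  have hkg : (k : ZMod n) * g = 0 := by
    have := hsum
    rw [nsmul_eq_mul] at this
    exact (left_eq_add.mp this)
  have hco : Nat.Coprime k n := Nat.coprime_comm.mp hgcd
  have hu : ((ZMod.unitOfCoprime k hco : (ZMod n)ˣ) : ZMod n) * g = 0 := by
    rwa [ZMod.coe_unitOfCoprime]
  exact (Units.mul_right_eq_zero _).mp hu

theorem stmt_6 (n k : ℕ) (hk1 : 1 ≤ k) (hk2 : k ≤ n - k) (hgcd : Nat.gcd n k = 1) :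
    -- translations act by graph automorphisms on J(n,k)
    (∀ (g : ZMod n) (A B : {A : Finset (ZMod n) // A.card = k}),
      (johnsonGraph n k).Adj A B ↔
        (johnsonGraph n k).Adj (johnsonTranslate A g) (johnsonTranslate B g)) ∧
    -- the action is free on the vertex set
    (∀ (g : ZMod n) (A : {A : Finset (ZMod n) // A.card = k}),
      johnsonTranslate A g = A → g = 0) ∧
    -- the action has exactly C(n,k)/n orbits on the vertex set
    Nat.card (Quot fun A B : {A : Finset (ZMod n) // A.card = k} =>
      ∃ g : ZMod n, johnsonTranslate A g = B) = n.choose k / n := by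
  classical
  have hn : 0 < n := by omega
  haveI : NeZero n := ⟨by omega⟩
  refine ⟨?_, fun g A => johnson_free n k hk1 hk2 hgcd g A, ?_⟩
  · intro g A B
    have hinj : Function.Injective (· + g : ZMod n → ZMod n) := add_left_injective g
    show _ ↔ ((A : Finset (ZMod n)).image (· + g) ∩ (B : Finset (ZMod n)).image (· + g)).card + 1 = k
    rw [← Finset.image_inter _ _ hinj, Finset.card_image_of_injective _ hinj]
    exact Iff.rfl
  · set V := {A : Finset (ZMod n) // A.card = k}
    -- quotient relation agrees with orbit relation
    have hcong : ∀ A B : V, (∃ g : ZMod n, johnsonTranslate A g = B) ↔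
        (AddAction.orbitRel (ZMod n) V).r A B := by
      intro A B
      constructor
      · rintro ⟨g, rfl⟩
        exact ⟨-g, by
          show (-g) +ᵥ (g +ᵥ A) = A
          rw [← add_vadd, neg_add_cancel, zero_vadd]⟩
      · rintro ⟨g, rfl⟩
        exact ⟨-g, by
          show johnsonTranslate (johnsonTranslate B g) (-g) = B
          show (-g) +ᵥ (g +ᵥ B) = B
          rw [← add_vadd, neg_add_cancel, zero_vadd]⟩
    have e : (Quot fun A B : V => ∃ g : ZMod n, johnsonTranslate A g = B) ≃
        Quotient (AddAction.orbitRel (ZMod n) V) :=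
      Quot.congrRight hcong
    rw [Nat.card_congr e]
    -- stabilizers are trivial
    have hstab : ∀ A : V, AddAction.stabilizer (ZMod n) A = ⊥ := by
      intro A
      ext g
      simp only [AddAction.mem_stabilizer_iff, AddSubgroup.mem_bot]
      exact ⟨fun h => johnson_free n k hk1 hk2 hgcd g A h, fun h => by subst h; exact zero_vadd _ _⟩
    haveI : Fintype (Quotient (AddAction.orbitRel (ZMod n) V)) := Fintype.ofFinite _
    have hclass := AddAction.card_eq_sum_card_addGroup_sub_card_stabilizer (ZMod n) V
    have hstabcard : ∀ ω : Quotient (AddAction.orbitRel (ZMod n) V),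
        Fintype.card (AddAction.stabilizer (ZMod n) (Quotient.out ω)) = 1 := by
      intro ω
      rw [Fintype.card_eq_one_iff]
      refine ⟨⟨0, ?_⟩, ?_⟩
      · exact zero_vadd _ _
      · rintro ⟨g, hg⟩
        have : g ∈ AddAction.stabilizer (ZMod n) (Quotient.out ω) := hg
        rw [hstab] at this
        exact Subtype.ext (by simpa using this)
    simp only [hstabcard, Nat.div_one] at hclass
    rw [Finset.sum_const, Finset.card_univ, ZMod.card, smul_eq_mul] at hclass
    have hV : Fintype.card V = n.choose k := by
      rw [Fintype.card_finset_len, ZMod.card]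
    rw [hV] at hclass
    rw [Nat.card_eq_fintype_card, hclass, Nat.mul_div_cancel _ hn]
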